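/- In the labelled hypercube Q_d, for every pair of vertices u and v, the temporal shortest distance from u to v equals the Hamming distance between u and v (the number of coordinates in which they differ); in particular it equals the graph distance between u and v in the hypercube graph. -/

import Mathlib

open scoped ENNReal BigOperators

/-- A temporal path from `u` to `v`, given as a list of steps `(next vertex, time label)`.
The labelling `lab` gives, for each (ordered) pair of vertices, the set of time labels of the
edge joining them (empty if there is no edge); it is symmetric for temporal graphs arising
from strategy profiles.  The conditions say that consecutive steps use time labels belonging
to the corresponding edge, that time labels strictly increase along the path, that no vertex is
repeated, and that the path ends at `v`. -/
def IsTemporalPath {V : Type*} (lab : V → V → Set ℕ) (u v : V) (p : List (V × ℕ)) : Prop :=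
  List.Chain (fun a b => b.2 ∈ lab a.1 b.1) (u, 0) p ∧
  List.Chain' (· < ·) (p.map Prod.snd) ∧
  (u :: p.map Prod.fst).Nodup ∧
  (u :: p.map Prod.fst).getLast (List.cons_ne_nil _ _) = v

/-- The temporal shortest distance from `u` to `v`: the least number of edges of a temporal
path from `u` to `v` (`0` if `u = v`, `⊤` if there is no temporal path). -/
noncomputable def temporalDist {V : Type*} (lab : V → V → Set ℕ) (u v : V) : ℕ∞ :=
  sInf {n : ℕ∞ | ∃ p : List (V × ℕ), IsTemporalPath lab u v p ∧ (p.length : ℕ∞) = n}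

/-- The labelling of the communication temporal graph `𝒢[s]` of a strategy profile `s`:
`t` is a label of the edge `uv` iff `(u, t) ∈ s v` or `(v, t) ∈ s u`. -/
def profLab {V : Type*} (s : V → Finset (V × ℕ)) : V → V → Set ℕ :=
  fun u v => {t | (u, t) ∈ s v ∨ (v, t) ∈ s u}

/-- The (finite) set of time labels of the edge `uv` in the communication temporal graph. -/
def labelFinset {V : Type*} [DecidableEq V] (s : V → Finset (V × ℕ)) (u v : V) : Finset ℕ :=
  (((s v).filter (fun p => p.1 = u)).image Prod.snd) ∪
    (((s u).filter (fun p => p.1 = v)).image Prod.snd)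

/-- The total number of time labels `∑ e ∈ E, |λ(e)|` of the communication temporal graph
(each unordered pair is counted once, whence the division by `2`). -/
def numLabels {V : Type*} [Fintype V] [DecidableEq V] (s : V → Finset (V × ℕ)) : ℕ :=
  (∑ u : V, ∑ v : V, if u = v then 0 else (labelFinset s u v).card) / 2

/-- The number of edges `|E|` of the communication temporal graph. -/
def numEdges {V : Type*} [Fintype V] [DecidableEq V] (s : V → Finset (V × ℕ)) : ℕ :=
  ((Finset.univ : Finset (V × V)).filter
    (fun q => q.1 ≠ q.2 ∧ (labelFinset s q.1 q.2).Nonempty)).card / 2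

/-- The social cost `c[s] = α·∑_{e ∈ E} |λ(e)| + ∑_{(u,v) ∈ V×V} d_{𝒢[s]}(u,v)`
of a strategy profile `s` for atomic cost `α`. -/
noncomputable def socialCost {V : Type*} [Fintype V] [DecidableEq V]
    (α : ℝ) (s : V → Finset (V × ℕ)) : ℝ≥0∞ :=
  ENNReal.ofReal α * (numLabels s : ℝ≥0∞) +
    ∑ u : V, ∑ v : V, (temporalDist (profLab s) u v : ℝ≥0∞)

/-- The individual cost `c[s](v) = α·|s(v)| + ∑_{w ∈ V} d_{𝒢[s]}(v,w)` of player `v`. -/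
noncomputable def indivCost {V : Type*} [Fintype V]
    (α : ℝ) (s : V → Finset (V × ℕ)) (v : V) : ℝ≥0∞ :=
  ENNReal.ofReal α * ((s v).card : ℝ≥0∞) +
    ∑ w : V, (temporalDist (profLab s) v w : ℝ≥0∞)

/-- A strategy profile is a Nash equilibrium if no player can strictly decrease its individual
cost by changing only its own strategy. -/
def IsNash {V : Type*} [Fintype V] [DecidableEq V] (α : ℝ) (s : V → Finset (V × ℕ)) : Prop :=
  ∀ (v : V) (t : Finset (V × ℕ)),
    ¬ indivCost α (Function.update s v t) v < indivCost α s v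

/-- The optimal social cost `c*(α, n)`: the minimum social cost over all strategy profiles
with `n` players and atomic cost `α`. -/
noncomputable def optCost (α : ℝ) (n : ℕ) : ℝ≥0∞ :=
  ⨅ s : Fin n → Finset (Fin n × ℕ), socialCost α s

/-- The price of anarchy `PoA(α, n)`: the maximum social cost of a Nash equilibrium with `n`
players and atomic cost `α`, divided by the optimal social cost `c*(α, n)`. -/
noncomputable def PoA (α : ℝ) (n : ℕ) : ℝ≥0∞ :=
  (⨆ s : {s : Fin n → Finset (Fin n × ℕ) // IsNash α s}, socialCost α s.1) / optCost α n

/-- The price of stability `PoS(α, n)`: the minimum social cost of a Nash equilibrium with `n`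
players and atomic cost `α`, divided by the optimal social cost `c*(α, n)`. -/
noncomputable def PoS (α : ℝ) (n : ℕ) : ℝ≥0∞ :=
  (⨅ s : {s : Fin n → Finset (Fin n × ℕ) // IsNash α s}, socialCost α s.1) / optCost α n

/-- The labelling of the hypercube `Q_d`: vertices are elements of `{0,1}^d`, two vertices
are joined by an edge iff they differ in exactly one coordinate, and the edge whose
endpoints differ in coordinate `i` (for `0 ≤ i < d`) carries the single time label `i + 1`. -/
def QLab (d : ℕ) : (Fin d → Bool) → (Fin d → Bool) → Set ℕ := fun u v =>
  {t | ∃ i : Fin d, t = (i : ℕ) + 1 ∧ u i ≠ v i ∧ ∀ j : Fin d, j ≠ i → u j = v j}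

/-- The hypercube graph on `{0,1}^d`: two vertices are adjacent iff their Hamming distance
is `1`, i.e. they differ in exactly one coordinate. -/
def cubeGraph (d : ℕ) : SimpleGraph (Fin d → Bool) where
  Adj u v := hammingDist u v = 1
  symm := ⟨fun u v h => (hammingDist_comm v u).trans h⟩
  loopless := ⟨fun u h => by simp [hammingDist_self] at h⟩

namespace CubeAux

variable {d : ℕ}

/-- Flip coordinate `i`. -/
def flip (u : Fin d → Bool) (i : Fin d) : Fin d → Bool := Function.update u i (!u i)

lemma flip_self (u : Fin d → Bool) (i : Fin d) : flip u i i = !u i :=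
  Function.update_self _ _ _

lemma flip_ne (u : Fin d → Bool) {i j : Fin d} (h : j ≠ i) : flip u i j = u j :=
  Function.update_of_ne h _ _

/-- The temporal path flipping coordinates along the list `L`. -/
def cubePath (u : Fin d → Bool) : List (Fin d) → List ((Fin d → Bool) × ℕ)
  | [] => []
  | i :: L => (flip u i, (i : ℕ) + 1) :: cubePath (flip u i) L

lemma hamming_one_of_diff {u w : Fin d → Bool} (i : Fin d)
    (h1 : u i ≠ w i) (h2 : ∀ j, j ≠ i → u j = w j) : hammingDist u w = 1 := by
  have : ({j | u j ≠ w j} : Finset (Fin d)) = {i} := by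
    ext j
    simp only [Finset.mem_filter, Finset.mem_univ, true_and, Finset.mem_singleton]
    constructor
    · intro hj; by_contra hji; exact hj (h2 j hji)
    · rintro rfl; exact h1
  rw [hammingDist, this, Finset.card_singleton]

lemma QLab_hamming {t : ℕ} {u w : Fin d → Bool} (h : t ∈ QLab d u w) :
    hammingDist u w = 1 := by
  obtain ⟨i, -, h1, h2⟩ := h
  exact hamming_one_of_diff i h1 h2

lemma mem_QLab_flip (u : Fin d → Bool) (i : Fin d) :
    (i : ℕ) + 1 ∈ QLab d u (flip u i) := by
  refine ⟨i, rfl, ?_, fun j hj => (flip_ne u hj).symm⟩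
  rw [flip_self]
  cases u i <;> simp

lemma cubePath_chain (L : List (Fin d)) : ∀ (u : Fin d → Bool) (t : ℕ),
    List.Chain (fun a b => b.2 ∈ QLab d a.1 b.1) (u, t) (cubePath u L) := by
  induction L with
  | nil => intro u t; exact List.Chain.nil
  | cons i L ih =>
    intro u t
    exact List.Chain.cons (mem_QLab_flip u i) (ih (flip u i) _)

lemma cubePath_snd (L : List (Fin d)) : ∀ u : Fin d → Bool,
    (cubePath u L).map Prod.snd = L.map (fun i : Fin d => (i : ℕ) + 1) := by
  induction L with
  | nil => intro u; rfl
  | cons i L ih => intro u; simp [cubePath, ih]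

lemma cubePath_length (L : List (Fin d)) : ∀ u : Fin d → Bool,
    (cubePath u L).length = L.length := by
  induction L with
  | nil => intro u; rfl
  | cons i L ih => intro u; simp [cubePath, ih]

lemma cubePath_agree (L : List (Fin d)) : ∀ (u : Fin d → Bool) (j : Fin d), j ∉ L →
    ∀ x ∈ (cubePath u L).map Prod.fst, x j = u j := by
  induction L with
  | nil => intro u j _ x hx; simp [cubePath] at hx
  | cons i L ih =>
    intro u j hj x hx
    have hji : j ≠ i := fun h => hj (h ▸ (List.mem_cons_self : i ∈ i :: L))
    have hjL : j ∉ L := fun h => hj (List.mem_cons_of_mem i h)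
    simp only [cubePath, List.map_cons, List.mem_cons] at hx
    rcases hx with rfl | hx
    · exact flip_ne u hji
    · rw [ih (flip u i) j hjL x hx, flip_ne u hji]

lemma cubePath_nodup (L : List (Fin d)) (hL : L.Pairwise (· < ·)) :
    ∀ u : Fin d → Bool, (u :: (cubePath u L).map Prod.fst).Nodup := by
  induction L with
  | nil => intro u; simp [cubePath]
  | cons i L ih =>
    intro u
    have hiL : i ∉ L := fun h => lt_irrefl i ((List.pairwise_cons.1 hL).1 i h)
    have htail := ih (List.pairwise_cons.1 hL).2 (flip u i)
    simp only [cubePath, List.map_cons, List.nodup_cons] at htail ⊢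
    refine ⟨?_, htail⟩
    intro hu
    rw [List.mem_cons] at hu
    rcases hu with hu | hu
    · have := congrFun hu i
      rw [flip_self] at this
      simp at this
    · have := cubePath_agree L (flip u i) i hiL u hu
      rw [flip_self] at this
      simp at this

lemma cubePath_getLast (L : List (Fin d)) (hL : L.Nodup) : ∀ u : Fin d → Bool,
    (u :: (cubePath u L).map Prod.fst).getLast (List.cons_ne_nil _ _) =
      fun j => if j ∈ L then !u j else u j := by
  induction L with
  | nil => intro u; simp [cubePath]
  | cons i L ih =>
    intro u
    have hiL : i ∉ L := (List.nodup_cons.1 hL).1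
    have := ih (List.nodup_cons.1 hL).2 (flip u i)
    simp only [cubePath, List.map_cons]
    rw [List.getLast_cons (List.cons_ne_nil _ _), this]
    funext j
    by_cases hji : j = i
    · subst hji
      simp [hiL, flip_self]
    · simp only [List.mem_cons, hji, false_or]
      by_cases hjL : j ∈ L <;> simp [hjL, flip_ne u hji]

lemma chain_hamming_le (l : List (Fin d → Bool)) : ∀ x : Fin d → Bool,
    List.Chain (fun a b => hammingDist a b ≤ 1) x l →
    hammingDist x ((x :: l).getLast (List.cons_ne_nil _ _)) ≤ l.length := by
  induction l with
  | nil => intro x _; simp [hammingDist_self]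
  | cons y l ih =>
    intro x hc
    replace hc := List.chain_cons.1 hc
    rw [List.getLast_cons (List.cons_ne_nil _ _)]
    calc hammingDist x ((y :: l).getLast (List.cons_ne_nil _ _))
        ≤ hammingDist x y + hammingDist y ((y :: l).getLast (List.cons_ne_nil _ _)) :=
          hammingDist_triangle _ _ _
      _ ≤ 1 + l.length := Nat.add_le_add hc.1 (ih y hc.2)
      _ = (y :: l).length := by simp [Nat.add_comm]

lemma hamming_le_path_length {u v : Fin d → Bool} {p : List ((Fin d → Bool) × ℕ)}
    (hp : IsTemporalPath (QLab d) u v p) : hammingDist u v ≤ p.length := by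
  obtain ⟨hc, -, -, hlast⟩ := hp
  have hc' : List.Chain (fun a b => hammingDist a b ≤ 1) u (p.map Prod.fst) := by
    have := (List.isChain_map (R := fun a b => hammingDist a b ≤ 1)
      (l := ((u, 0) : (Fin d → Bool) × ℕ) :: p) Prod.fst).2
      (List.IsChain.imp (fun a b h => le_of_eq (QLab_hamming h)) hc)
    exact this
  have := chain_hamming_le (p.map Prod.fst) u hc'
  rw [hlast] at this
  simpa using this

/-- The sorted list of differing coordinates. -/
noncomputable def diffList (u v : Fin d → Bool) : List (Fin d) :=
  ({j | u j ≠ v j} : Finset (Fin d)).sort (· ≤ ·)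

lemma mem_diffList {u v : Fin d → Bool} {j : Fin d} : j ∈ diffList u v ↔ u j ≠ v j := by
  simp [diffList, Finset.mem_sort]

lemma diffList_sorted (u v : Fin d → Bool) : (diffList u v).Pairwise (· < ·) :=
  (Finset.sortedLT_sort _).pairwise

lemma diffList_length (u v : Fin d → Bool) : (diffList u v).length = hammingDist u v := by
  rw [diffList, Finset.length_sort, hammingDist]

lemma temporal_path_exists (u v : Fin d → Bool) :
    ∃ p, IsTemporalPath (QLab d) u v p ∧ p.length = hammingDist u v := by
  refine ⟨cubePath u (diffList u v), ⟨cubePath_chain _ u 0, ?_, ?_, ?_⟩, ?_⟩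
  · rw [cubePath_snd]
    have := (diffList_sorted u v).isChain
    exact (List.isChain_map (fun i : Fin d => (i : ℕ) + 1)).2 (this.imp (fun a b h => Nat.add_lt_add_right h 1))
  · exact cubePath_nodup _ (diffList_sorted u v) u
  · rw [cubePath_getLast _ (diffList_sorted u v).nodup]
    funext j
    by_cases h : u j = v j
    · simp [mem_diffList, h]
    · have : j ∈ diffList u v := mem_diffList.2 h
      simp only [this, if_true]
      cases hu : u j <;> cases hv : v j <;> simp_all
  · rw [cubePath_length, diffList_length]

lemma temporalDist_eq_hamming (u v : Fin d → Bool) :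
    temporalDist (QLab d) u v = (hammingDist u v : ℕ∞) := by
  apply le_antisymm
  · obtain ⟨p, hp, hlen⟩ := temporal_path_exists u v
    exact sInf_le ⟨p, hp, by rw [hlen]⟩
  · apply le_sInf
    rintro n ⟨p, hp, rfl⟩
    exact_mod_cast hamming_le_path_length hp

lemma walk_exists : ∀ (k : ℕ) (u v : Fin d → Bool), hammingDist u v = k →
    ∃ w : (cubeGraph d).Walk u v, w.length = k := by
  intro k
  induction k with
  | zero =>
    intro u v h
    obtain rfl := hammingDist_eq_zero.1 h
    exact ⟨SimpleGraph.Walk.nil, rfl⟩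
  | succ k ih =>
    intro u v h
    have hne : ({j | u j ≠ v j} : Finset (Fin d)).Nonempty := by
      rw [← Finset.card_pos, ← hammingDist, h]; omega
    obtain ⟨i, hi⟩ := hne
    rw [Finset.mem_filter] at hi
    have hiuv : u i ≠ v i := hi.2
    set u' := Function.update u i (v i) with hu'
    have hadj : (cubeGraph d).Adj u u' := by
      show hammingDist u u' = 1
      apply hamming_one_of_diff i
      · rw [hu', Function.update_self]; exact hiuv
      · intro j hj; rw [hu', Function.update_of_ne hj]
    have hstep : hammingDist u' v = k := by
      have hset : ({j | u' j ≠ v j} : Finset (Fin d)) = ({j | u j ≠ v j} : Finset (Fin d)).erase i := by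
        ext j
        simp only [Finset.mem_filter, Finset.mem_univ, true_and, Finset.mem_erase]
        by_cases hj : j = i
        · subst hj; simp [hu', Function.update_self]
        · simp [hu', Function.update_of_ne hj, hj]
      have : hammingDist u' v = (({j | u j ≠ v j} : Finset (Fin d)).erase i).card := by
        rw [hammingDist, hset]
      rw [this, Finset.card_erase_of_mem (by simp [hiuv]), ← hammingDist, h]
      omega
    obtain ⟨w, hw⟩ := ih u' v hstep
    exact ⟨SimpleGraph.Walk.cons hadj w, by simp [hw]⟩

lemma hamming_le_walk {u v : Fin d → Bool} (w : (cubeGraph d).Walk u v) :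
    hammingDist u v ≤ w.length := by
  induction w with
  | nil => simp [hammingDist_self]
  | @cons a b c hadj p ih =>
    calc hammingDist a c ≤ hammingDist a b + hammingDist b c := hammingDist_triangle _ _ _
      _ ≤ 1 + p.length := Nat.add_le_add (le_of_eq (hadj : hammingDist a b = 1)) ih
      _ = (SimpleGraph.Walk.cons hadj p).length := by simp [Nat.add_comm]

lemma hamming_eq_dist (u v : Fin d → Bool) :
    hammingDist u v = (cubeGraph d).dist u v := by
  obtain ⟨w, hw⟩ := walk_exists (hammingDist u v) u v rfl
  apply le_antisymm
  · obtain ⟨w', hw'⟩ := (SimpleGraph.Walk.reachable w).exists_walk_length_eq_dist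
    rw [← hw']
    exact hamming_le_walk w'
  · rw [← hw]
    exact SimpleGraph.dist_le w

end CubeAux

/-- In the labelled hypercube `Q_d`, the temporal shortest distance between any two vertices
equals their Hamming distance (the number of coordinates in which they differ); in
particular, it equals the graph distance in the hypercube graph. -/
theorem statement_13 (d : ℕ) (hd : 1 ≤ d) (u v : Fin d → Bool) :
    temporalDist (QLab d) u v = (hammingDist u v : ℕ∞) ∧
      hammingDist u v = (cubeGraph d).dist u v := by
  exact ⟨CubeAux.temporalDist_eq_hamming u v, CubeAux.hamming_eq_dist u v⟩
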